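/- For every integer n ≥ 2 and every integer r with 3 < r ≤ n+1, the (n+1)-dimensional n-ary Filippov algebra D_r degenerates to D_{r−1}; that is, the structure of D_{r−1} lies in the closure of the GL(V)-orbit of the structure of D_r. -/

import Mathlib

open Function Submodule

/-! Common framework: `V = ℂ^{n+1}`, `n`-ary multiplications as functions
`(Fin n → V) → V`, the action of `GL(V)` on them, orbits, and the
(n+1)-dimensional n-ary Filippov algebras of Kaygorodov–Volkov, each described
as an alternating `n`-linear map by its values on the increasing tuples of
distinct standard basis vectors (0-indexed: `bt n j` is the tuple omitting `e j`). -/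

/-- The underlying space `V = ℂ^{n+1}`. -/
abbrev nV (n : ℕ) : Type := Fin (n + 1) → ℂ

/-- The `j`-th standard basis vector of `V` (0-indexed). -/
def sb (n : ℕ) (j : Fin (n + 1)) : nV n := Pi.single j 1

/-- The increasing `n`-tuple of standard basis vectors omitting `e j`. -/
def bt (n : ℕ) (j : Fin (n + 1)) : Fin n → nV n := fun k => sb n (j.succAbove k)

/-- The action of `GL(V)` (invertible linear maps) on `n`-ary multiplications:
`(g • μ)(x₁, …, xₙ) = g (μ (g⁻¹ x₁, …, g⁻¹ xₙ))`. -/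
noncomputable def glAct (n : ℕ) (g : nV n ≃ₗ[ℂ] nV n) (μ : (Fin n → nV n) → nV n) :
    (Fin n → nV n) → nV n :=
  fun x => g (μ fun i => g.symm (x i))

/-- The `GL(V)`-orbit of an `n`-ary multiplication. -/
def glOrbit (n : ℕ) (μ : (Fin n → nV n) → nV n) : Set ((Fin n → nV n) → nV n) :=
  {ν | ∃ g : nV n ≃ₗ[ℂ] nV n, ν = glAct n g μ}

/-- The algebra `B`: `[e₂, …, e_{n+1}] = e₁` (0-indexed: the tuple omitting `e 0`
maps to `e 0`), all other increasing basis products zero. -/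
def IsB (n : ℕ) (μ : AlternatingMap ℂ (nV n) (nV n) (Fin n)) : Prop :=
  μ (bt n 0) = sb n 0 ∧ ∀ j : Fin (n + 1), j ≠ 0 → μ (bt n j) = 0

/-- The algebra `C₁`: `[e₂, …, e_{n+1}] = e₁`, `[e₁, e₃, …, e_{n+1}] = e₂`. -/
def IsC1 (n : ℕ) (μ : AlternatingMap ℂ (nV n) (nV n) (Fin n)) : Prop :=
  μ (bt n 0) = sb n 0 ∧ μ (bt n 1) = sb n 1 ∧
    ∀ j : Fin (n + 1), j ≠ 0 → j ≠ 1 → μ (bt n j) = 0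

/-- The algebra `C₂(α)`: `[e₂, …, e_{n+1}] = α e₁ + e₂`, `[e₁, e₃, …, e_{n+1}] = e₂`. -/
def IsC2 (n : ℕ) (α : ℂ) (μ : AlternatingMap ℂ (nV n) (nV n) (Fin n)) : Prop :=
  μ (bt n 0) = α • sb n 0 + sb n 1 ∧ μ (bt n 1) = sb n 1 ∧
    ∀ j : Fin (n + 1), j ≠ 0 → j ≠ 1 → μ (bt n j) = 0

/-- The algebra `C₃`: `[e₁, e₃, …, e_{n+1}] = e₁`, `[e₂, e₃, …, e_{n+1}] = e₂`. -/
def IsC3 (n : ℕ) (μ : AlternatingMap ℂ (nV n) (nV n) (Fin n)) : Prop :=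
  μ (bt n 1) = sb n 0 ∧ μ (bt n 0) = sb n 1 ∧
    ∀ j : Fin (n + 1), j ≠ 0 → j ≠ 1 → μ (bt n j) = 0

/-- The algebra `D_r`: `[e₁, …, e_{i-1}, e_{i+1}, …, e_{n+1}] = e_i` for `1 ≤ i ≤ r`
(0-indexed: the tuple omitting `e j` maps to `e j` for `j < r` and to `0` otherwise). -/
def IsD (n r : ℕ) (μ : AlternatingMap ℂ (nV n) (nV n) (Fin n)) : Prop :=
  ∀ j : Fin (n + 1), ((j : ℕ) < r → μ (bt n j) = sb n j) ∧ (r ≤ (j : ℕ) → μ (bt n j) = 0)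

lemma alt_ext {n : ℕ} {f g : AlternatingMap ℂ (nV n) (nV n) (Fin n)}
    (h : ∀ j, f (bt n j) = g (bt n j)) : f = g := by
  classical
  apply Module.Basis.ext_alternating (Pi.basisFun ℂ (Fin (n+1)))
  intro v hv
  have hns : ¬ Function.Surjective v := by
    intro hs
    have := Fintype.card_le_of_surjective v hs
    simp [Fintype.card_fin] at this
  rw [Function.Surjective] at hns
  push_neg at hns
  obtain ⟨j, hj⟩ := hns
  replace hj : ∀ i, v i ≠ j := fun i => hj i
  choose w hw using fun i => Fin.exists_succAbove_eq (hj i)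
  have hwinj : Function.Injective w := by
    intro a b hab
    apply hv
    rw [← hw a, ← hw b, hab]
  let σ : Equiv.Perm (Fin n) := Equiv.ofBijective w (Finite.injective_iff_bijective.mp hwinj)
  have key : (fun i => (Pi.basisFun ℂ (Fin (n+1))) (v i)) = bt n j ∘ σ := by
    funext i
    show (Pi.basisFun ℂ (Fin (n+1))) (v i) = sb n (j.succAbove (w i))
    rw [hw i]
    funext l
    simp [sb, Pi.basisFun_apply, Pi.single_apply]
  rw [key, f.map_perm, g.map_perm, h j]

/-- Diagonal linear equivalence. -/
noncomputable def diagEq (n : ℕ) (d : Fin (n+1) → ℂ) (hd : ∀ k, d k ≠ 0) :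
    nV n ≃ₗ[ℂ] nV n where
  toFun x := fun k => d k * x k
  invFun x := fun k => (d k)⁻¹ * x k
  map_add' x y := by funext k; simp [mul_add]
  map_smul' c x := by funext k; simp [Pi.smul_apply, smul_eq_mul]; ring
  left_inv x := by
    funext k
    show (d k)⁻¹ * (d k * x k) = x k
    rw [← mul_assoc, inv_mul_cancel₀ (hd k), one_mul]
  right_inv x := by
    funext k
    show d k * ((d k)⁻¹ * x k) = x k
    rw [← mul_assoc, mul_inv_cancel₀ (hd k), one_mul]

lemma diagEq_single (n : ℕ) (d : Fin (n+1) → ℂ) (hd : ∀ k, d k ≠ 0) (j : Fin (n+1)) :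
    diagEq n d hd (sb n j) = d j • sb n j := by
  funext l
  have h1 : (diagEq n d hd (sb n j)) l = d l * sb n j l := rfl
  rw [h1, Pi.smul_apply, smul_eq_mul]
  rcases eq_or_ne l j with rfl | hlj
  · rfl
  · simp [sb, Pi.single_eq_of_ne hlj]

lemma diagEq_symm_single (n : ℕ) (d : Fin (n+1) → ℂ) (hd : ∀ k, d k ≠ 0) (j : Fin (n+1)) :
    (diagEq n d hd).symm (sb n j) = (d j)⁻¹ • sb n j := by
  funext l
  have h1 : ((diagEq n d hd).symm (sb n j)) l = (d l)⁻¹ * sb n j l := rfl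
  rw [h1, Pi.smul_apply, smul_eq_mul]
  rcases eq_or_ne l j with rfl | hlj
  · rfl
  · simp [sb, Pi.single_eq_of_ne hlj]


/-- For every integer `n ≥ 2` and every `r` with `3 < r ≤ n+1`,
the algebra `D_r` degenerates to `D_{r-1}`. -/
theorem Dr_degenerates_to_Dr_sub_one (n : ℕ) (hn : 2 ≤ n) (r : ℕ) (hr : 3 < r) (hrn : r ≤ n + 1)
    (μ ν : AlternatingMap ℂ (nV n) (nV n) (Fin n)) (hμ : IsD n r μ) (hν : IsD n (r - 1) ν) :
    ⇑ν ∈ closure (glOrbit n ⇑μ) := by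
  classical
  set ρ : AlternatingMap ℂ (nV n) (nV n) (Fin n) := μ - ν with hρ
  set F : ℂ → ((Fin n → nV n) → nV n) := fun c => ⇑(ν + c • ρ) with hF
  have hF0 : F 0 = ⇑ν := by funext x; simp [hF]
  have hcont : Continuous F := by
    apply continuous_pi
    intro x
    simp only [hF, AlternatingMap.add_apply, AlternatingMap.smul_apply]
    exact continuous_const.add (continuous_id.smul continuous_const)
  set r₀ : Fin (n+1) := ⟨r - 1, by omega⟩ with hr₀
  have hr₀v : (r₀ : ℕ) = r - 1 := rfl
  -- each F c with c ≠ 0 is in the orbit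
  have horb : ∀ c : ℂ, c ≠ 0 → F c ∈ glOrbit n ⇑μ := by
    intro c hc
    obtain ⟨t, ht⟩ := IsAlgClosed.exists_pow_nat_eq c⁻¹ (n := 2*n-2) (by omega)
    have htne : t ≠ 0 := by
      intro h; rw [h, zero_pow (by omega)] at ht
      exact hc (by simpa using ht.symm)
    have hc' : c = (t⁻¹) ^ (2*n - 2) := by
      rw [inv_pow, ht, inv_inv]
    set d : Fin (n+1) → ℂ := fun k => if k = r₀ then (t⁻¹) ^ (n-2) else t with hd
    have hdne : ∀ k, d k ≠ 0 := by
      intro k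
      simp only [hd]
      split <;> [exact pow_ne_zero _ (inv_ne_zero htne); exact htne]
    set g := diagEq n d hdne with hg
    refine ⟨g, ?_⟩
    -- the transported alternating map
    set A : AlternatingMap ℂ (nV n) (nV n) (Fin n) :=
      (g.toLinearMap).compAlternatingMap (μ.compLinearMap g.symm.toLinearMap) with hA
    have hAact : glAct n g ⇑μ = ⇑A := rfl
    have hkey : A = ν + c • ρ := by
      apply alt_ext
      intro j
      -- compute A (bt n j)
      have hvals : A (bt n j) = (∏ i : Fin n, (d (j.succAbove i))⁻¹) • g (μ (bt n j)) := by
        have h1 : (fun i => g.symm (bt n j i)) =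
            fun i => (d (j.succAbove i))⁻¹ • bt n j i := by
          funext i
          exact diagEq_symm_single n d hdne (j.succAbove i)
        rw [hA]
        rw [LinearMap.compAlternatingMap_apply, AlternatingMap.compLinearMap_apply]
        simp only [LinearEquiv.coe_coe]
        rw [h1]
        have h2 : μ (fun i => (d (j.succAbove i))⁻¹ • bt n j i)
            = (∏ i : Fin n, (d (j.succAbove i))⁻¹) • μ (bt n j) :=
          μ.toMultilinearMap.map_smul_univ (fun i => (d (j.succAbove i))⁻¹) (bt n j)
        rw [h2, map_smul]
      -- the product over all coordinates
      have hprodall : ∀ a b : ℂ, (∏ k : Fin (n+1), (if k = r₀ then a else b)) = a * b ^ n := by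
        intro a b
        rw [← Finset.mul_prod_erase Finset.univ _ (Finset.mem_univ r₀), if_pos rfl]
        congr 1
        rw [Finset.prod_congr rfl (fun k hk => by
          rw [if_neg (Finset.ne_of_mem_erase hk)]), Finset.prod_const,
          Finset.card_erase_of_mem (Finset.mem_univ r₀), Finset.card_univ, Fintype.card_fin]
        norm_num
      have hprodinv : (∏ k : Fin (n+1), (d k)⁻¹) = t ^ (n-2) * (t⁻¹) ^ n := by
        have : (fun k : Fin (n+1) => (d k)⁻¹)
            = fun k => if k = r₀ then t ^ (n-2) else t⁻¹ := by
          funext k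
          simp only [hd]
          split <;> simp [inv_pow]
        rw [this, hprodall]
      have hsuccprod : (∏ i : Fin n, (d (j.succAbove i))⁻¹)
          = d j * (t ^ (n-2) * (t⁻¹) ^ n) := by
        have hp := Fin.prod_univ_succAbove (fun k => (d k)⁻¹) j
        rw [hprodinv] at hp
        rw [hp, ← mul_assoc, mul_inv_cancel₀ (hdne j), one_mul]
      rw [hvals, hsuccprod]
      -- RHS values
      have hρbt : ∀ k, ρ (bt n k) = μ (bt n k) - ν (bt n k) := by
        intro k; simp [hρ]
      rcases lt_trichotomy (j : ℕ) (r - 1) with hj | hj | hj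
      · -- j < r-1 : coefficient is 1
        have hjr₀ : j ≠ r₀ := by
          intro h; rw [h] at hj; omega
        have hdj : d j = t := by simp [hd, hjr₀]
        have hμj : μ (bt n j) = sb n j := (hμ j).1 (by omega)
        have hνj : ν (bt n j) = sb n j := (hν j).1 hj
        have hcoeff : t ^ 2 * (t ^ (n-2) * (t⁻¹) ^ n) = 1 := by
          rw [← mul_assoc, ← pow_add]
          have h2n : 2 + (n - 2) = n := by omega
          rw [h2n, inv_pow]
          exact mul_inv_cancel₀ (pow_ne_zero _ htne)
        rw [hμj, diagEq_single n d hdne j, smul_smul, hdj]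
        have hco : t * (t ^ (n - 2) * t⁻¹ ^ n) * t = 1 := by
          calc t * (t ^ (n - 2) * t⁻¹ ^ n) * t = t ^ 2 * (t ^ (n-2) * (t⁻¹) ^ n) := by ring
            _ = 1 := hcoeff
        rw [hco, one_smul]
        simp [hρbt, hμj, hνj]
      · -- j = r₀ : coefficient is c
        have hjr₀ : j = r₀ := by
          apply Fin.ext; rw [hj]
        have hdj : d j = (t⁻¹) ^ (n-2) := by simp [hd, hjr₀]
        have hμj : μ (bt n j) = sb n j := (hμ j).1 (by omega)
        have hνj : ν (bt n j) = 0 := (hν j).2 (by omega)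
        have hcoeff : ((t⁻¹) ^ (n-2)) ^ 2 * (t ^ (n-2) * (t⁻¹) ^ n) = c := by
          have h1 : (t⁻¹) ^ (n-2) * t ^ (n-2) = 1 := by
            rw [inv_pow]; exact inv_mul_cancel₀ (pow_ne_zero _ htne)
          calc ((t⁻¹) ^ (n-2)) ^ 2 * (t ^ (n-2) * (t⁻¹) ^ n)
              = ((t⁻¹) ^ (n-2) * (t⁻¹) ^ n) * ((t⁻¹) ^ (n-2) * t ^ (n-2)) := by ring
            _ = (t⁻¹) ^ (2*n-2) := by
                rw [h1, mul_one, ← pow_add]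
                congr 1
                omega
            _ = c := hc'.symm
        rw [hμj, diagEq_single n d hdne j, smul_smul, hdj]
        have hco : (t⁻¹) ^ (n-2) * (t ^ (n - 2) * t⁻¹ ^ n) * (t⁻¹) ^ (n-2) = c := by
          calc (t⁻¹) ^ (n-2) * (t ^ (n - 2) * t⁻¹ ^ n) * (t⁻¹) ^ (n-2)
              = ((t⁻¹) ^ (n-2)) ^ 2 * (t ^ (n-2) * (t⁻¹) ^ n) := by ring
            _ = c := hcoeff
        rw [hco]
        simp [hρbt, hμj, hνj]
      · -- r ≤ j : everything is 0
        have hμj : μ (bt n j) = 0 := (hμ j).2 (by omega)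
        have hνj : ν (bt n j) = 0 := (hν j).2 (by omega)
        rw [hμj, map_zero, smul_zero]
        simp [hρbt, hμj, hνj]
    rw [hAact, hkey]
  -- conclude by a limit argument
  have h0 : (0:ℂ) ∈ closure {c : ℂ | c ≠ 0} := by
    have hd : Dense ({(0:ℂ)}ᶜ) := dense_compl_singleton 0
    have := hd 0
    convert this using 2
    ext c; simp
  have hmem : F 0 ∈ closure (F '' {c : ℂ | c ≠ 0}) :=
    hcont.continuousWithinAt.mem_closure_image h0
  rw [hF0] at hmem
  refine closure_mono ?_ hmem
  rintro _ ⟨c, hc, rfl⟩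
  exact horb c hc
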